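/- Let N be a positive natural number, M ∈ ℝᴺˣᴺ a symmetric invertible matrix, J : ℝᴺ → ℝᴺˣᴺ a matrix-valued map with J(a)ᵀ = −J(a) for all a, and H : ℝᴺ → ℝ differentiable. Suppose a : ℝ → ℝᴺ is differentiable and b : ℝ → ℝᴺ satisfies, for all t, the semi-discrete mixed system M a'(t) = J(a(t)) b(t) and M b(t) = ∇H(a(t)). Then a'(t) = Ĵ(a(t)) ∇H(a(t)) with Ĵ(a) := M⁻¹ J(a) M⁻¹, and the discrete Hamiltonian is exactly conserved: t ↦ H(a(t)) is constant. -/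

import Mathlib

open Matrix

/-- Let `M` be symmetric invertible, `J(a)` skew-symmetric for all `a`, and `H`
differentiable. If `a, b : ℝ → ℝᴺ` satisfy the semi-discrete mixed system
`M a'(t) = J(a(t)) b(t)`, `M b(t) = ∇H(a(t))`, then `a'(t) = Ĵ(a(t)) ∇H(a(t))` with
`Ĵ(a) = M⁻¹ J(a) M⁻¹`, and the discrete Hamiltonian `t ↦ H(a(t))` is exactly conserved. -/
theorem stmt_7 (N : ℕ) (hN : 0 < N)
    (M : Matrix (Fin N) (Fin N) ℝ) (hMsymm : M.IsSymm) (hMu : IsUnit M)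
    (J : EuclideanSpace ℝ (Fin N) → Matrix (Fin N) (Fin N) ℝ)
    (hJ : ∀ x, (J x)ᵀ = -(J x))
    (H : EuclideanSpace ℝ (Fin N) → ℝ) (hH : Differentiable ℝ H)
    (a a' b : ℝ → EuclideanSpace ℝ (Fin N))
    (ha : ∀ t : ℝ, HasDerivAt a (a' t) t)
    (h1 : ∀ t : ℝ, M.mulVec (a' t) = (J (a t)).mulVec (b t))
    (h2 : ∀ t : ℝ, M.mulVec (b t) = (gradient H (a t) : EuclideanSpace ℝ (Fin N))) :
    (∀ t : ℝ, a' t = (M⁻¹ * J (a t) * M⁻¹).mulVec (gradient H (a t) : EuclideanSpace ℝ (Fin N))) ∧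
      ∀ t s : ℝ, H (a t) = H (a s) := by
  have hMinv : M⁻¹ * M = 1 := Matrix.nonsing_inv_mul M ((Matrix.isUnit_iff_isUnit_det M).mp hMu)
  have hMT : Mᵀ = M := hMsymm
  constructor
  · intro t
    have : (M⁻¹ * J (a t) * M⁻¹).mulVec (M.mulVec (b t)) = a' t := by
      rw [← mulVec_mulVec, mulVec_mulVec (b t) M⁻¹ M, hMinv, one_mulVec,
        ← mulVec_mulVec, ← h1, mulVec_mulVec, hMinv, one_mulVec]
    rw [← h2 t, this]
  · -- conservation
    have key : ∀ t : ℝ, HasDerivAt (fun t => H (a t)) 0 t := by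
      intro t
      have hg : HasGradientAt H (gradient H (a t)) (a t) :=
        (hH (a t)).hasGradientAt
      have hd : HasDerivAt (fun t => H (a t))
          (inner ℝ (gradient H (a t)) (a' t) : ℝ) t :=
        hg.hasFDerivAt.comp_hasDerivAt t (ha t)
      have hz : (inner ℝ (gradient H (a t)) (a' t) : ℝ) = 0 := by
        have hdot : (inner ℝ (gradient H (a t)) (a' t) : ℝ)
            = (gradient H (a t) : EuclideanSpace ℝ (Fin N)) ⬝ᵥ a' t := by
          simp only [PiLp.inner_apply, dotProduct, RCLike.inner_apply, conj_trivial]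
          exact Finset.sum_congr rfl (fun i _ => by ring)
        rw [hdot, ← h2 t]
        have e : (M *ᵥ b t) ⬝ᵥ a' t = (J (a t) *ᵥ b t) ⬝ᵥ b t := by
          rw [dotProduct_comm, dotProduct_mulVec, ← hMT, vecMul_transpose, h1, dotProduct_comm]
        have e2 : (J (a t) *ᵥ b t) ⬝ᵥ b t = -((J (a t) *ᵥ b t) ⬝ᵥ b t) := by
          conv_lhs => rw [dotProduct_comm, dotProduct_mulVec, ← mulVec_transpose, hJ,
            neg_mulVec, neg_dotProduct]
        rw [e]; linarith
      rw [← hz]; exact hd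
    intro t s
    exact is_const_of_deriv_eq_zero (fun x => (key x).differentiableAt)
      (fun x => (key x).deriv) t s
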